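/- Let A₁,...,A_k be 2n×2n real matrices each admitting a symplectic dilation of order 2(n+m), and let p₁,...,p_k be positive reals summing to 1. Then the convex combination Σᵢ pᵢ Aᵢ admits a symplectic dilation of order 2k(n+m). -/

import Mathlib

open Matrix

/-- The 2x2 matrix J₂ = [[0,-1],[1,0]]. -/
def J2 : Matrix (Fin 2) (Fin 2) ℝ := !![0, -1; 1, 0]

/-- The 2n x 2n block-diagonal matrix with n diagonal blocks J₂. -/
def J (n : ℕ) : Matrix (Fin (2*n)) (Fin (2*n)) ℝ :=
  Matrix.of fun i j =>
    if i.val = j.val + 1 ∧ j.val % 2 = 0 then 1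
    else if j.val = i.val + 1 ∧ i.val % 2 = 0 then -1 else 0
/-- Entry function of the standard symplectic form. -/
def Jval (u v : ℕ) : ℝ :=
  if u = v + 1 ∧ v % 2 = 0 then 1
  else if v = u + 1 ∧ u % 2 = 0 then -1 else 0

lemma J_apply (q : ℕ) (i j : Fin (2*q)) : J q i j = Jval i.val j.val := rfl

lemma Jval_shift (c u v : ℕ) (hc : c % 2 = 0) : Jval (c + u) (c + v) = Jval u v := by
  unfold Jval
  split_ifs <;> first | rfl | (exfalso; omega)

lemma Jval_split {c u v : ℕ} (hc : c % 2 = 0) (hu : u < c) (hv : c ≤ v) :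
    Jval u v = 0 ∧ Jval v u = 0 := by
  unfold Jval
  constructor <;> (split_ifs <;> first | rfl | (exfalso; omega))

lemma block_inj {w a b i j : ℕ} (hi : i < w) (hj : j < w)
    (h : a * w + i = b * w + j) : a = b ∧ i = j := by
  rcases Nat.lt_trichotomy a b with hab | hab | hab
  · exfalso
    have h1 : (a+1) * w ≤ b * w := Nat.mul_le_mul (by omega) (le_refl w)
    have h2 : (a+1) * w = a * w + w := by ring
    omega
  · subst hab; omega
  · exfalso
    have h1 : (b+1) * w ≤ a * w := Nat.mul_le_mul (by omega) (le_refl w)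
    have h2 : (b+1) * w = b * w + w := by ring
    omega

lemma key_card {n m k : ℕ} (hk : 0 < k) :
    2*(k*(n+m)-n) = (k-1)*(2*n) + k*(2*m) := by
  obtain ⟨k', rfl⟩ : ∃ k', k = k' + 1 := ⟨k-1, by omega⟩
  have h1 : (k'+1)*(n+m) - n = k'*n + k'*m + m := by
    have h : (k'+1)*(n+m) = (k'*n + k'*m + m) + n := by ring
    rw [h, Nat.add_sub_cancel]
  rw [h1, Nat.succ_sub_one]
  ring

lemma bound1 {n m k a i : ℕ} (ha : a < k) (ha1 : 1 ≤ a) (hi : i < 2*n) :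
    (a-1)*(2*n) + i < 2*(k*(n+m)-n) := by
  rw [key_card (by omega : 0 < k)]
  have h1 : (a-1)*(2*n) + 2*n = a*(2*n) := by
    obtain ⟨a', rfl⟩ : ∃ a', a = a' + 1 := ⟨a-1, by omega⟩
    simp [Nat.succ_sub_one]
    ring
  have h2 : a*(2*n) ≤ (k-1)*(2*n) := Nat.mul_le_mul (by omega) (le_refl _)
  omega

lemma bound2 {n m k a j : ℕ} (ha : a < k) (hj : j < 2*m) :
    (k-1)*(2*n) + a*(2*m) + j < 2*(k*(n+m)-n) := by
  rw [key_card (by omega : 0 < k)]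
  have h1 : a*(2*m) + 2*m = (a+1)*(2*m) := by ring
  have h2 : (a+1)*(2*m) ≤ k*(2*m) := Nat.mul_le_mul (by omega) (le_refl _)
  omega

def gfun (n m k : ℕ) :
    (Fin (2*n) ⊕ Fin (2*m)) × Fin k → Fin (2*n) ⊕ Fin (2*(k*(n+m)-n))
  | (Sum.inl i, a) =>
    if h : a.val = 0 then Sum.inl i
    else Sum.inr ⟨(a.val-1)*(2*n) + i.val, bound1 a.isLt (by omega) i.isLt⟩
  | (Sum.inr j, a) => Sum.inr ⟨(k-1)*(2*n) + a.val*(2*m) + j.val, bound2 a.isLt j.isLt⟩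

lemma gfun_inj (n m k : ℕ) : Function.Injective (gfun n m k) := by
  rintro ⟨x, a⟩ ⟨y, b⟩ h
  rcases x with i | i <;> rcases y with j | j
  · -- inl, inl
    simp only [gfun] at h
    split_ifs at h with h1 h2
    · obtain rfl : i = j := by simpa using h
      have : a = b := Fin.ext (by omega)
      rw [this]
    · simp only [Sum.inr.injEq, Fin.mk.injEq] at h
      obtain ⟨hab, hij⟩ := block_inj i.isLt j.isLt h
      have ha : a = b := Fin.ext (by omega)
      have hi : i = j := Fin.ext (by omega)
      rw [ha, hi]
  · -- inl, inr
    exfalso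
    simp only [gfun] at h
    split_ifs at h with h1
    simp only [Sum.inr.injEq, Fin.mk.injEq] at h
    have e1 : (a.val-1)*(2*n) + 2*n = a.val*(2*n) := by
      obtain ⟨a', ha'⟩ : ∃ a', a.val = a' + 1 := ⟨a.val-1, by omega⟩
      rw [ha', Nat.add_sub_cancel]; ring
    have e2 : a.val*(2*n) ≤ (k-1)*(2*n) :=
      Nat.mul_le_mul (by have := a.isLt; omega) (le_refl _)
    have := i.isLt
    omega
  · -- inr, inl
    exfalso
    simp only [gfun] at h
    split_ifs at h with h1
    simp only [Sum.inr.injEq, Fin.mk.injEq] at h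
    have e1 : (b.val-1)*(2*n) + 2*n = b.val*(2*n) := by
      obtain ⟨b', hb'⟩ : ∃ b', b.val = b' + 1 := ⟨b.val-1, by omega⟩
      rw [hb', Nat.add_sub_cancel]; ring
    have e2 : b.val*(2*n) ≤ (k-1)*(2*n) :=
      Nat.mul_le_mul (by have := b.isLt; omega) (le_refl _)
    have := j.isLt
    omega
  · -- inr, inr
    simp only [gfun, Sum.inr.injEq, Fin.mk.injEq] at h
    have h' : a.val * (2*m) + i.val = b.val * (2*m) + j.val := by omega
    obtain ⟨hab, hij⟩ := block_inj i.isLt j.isLt h'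
    have ha : a = b := Fin.ext hab
    have hi : i = j := Fin.ext hij
    rw [ha, hi]

lemma gfun_bij (n m k : ℕ) (hk : 0 < k) : Function.Bijective (gfun n m k) := by
  rw [Fintype.bijective_iff_injective_and_card]
  refine ⟨gfun_inj n m k, ?_⟩
  simp only [Fintype.card_prod, Fintype.card_sum, Fintype.card_fin]
  rw [key_card hk]
  have e1 : (k-1)*(2*n) + 2*n = k*(2*n) := by
    obtain ⟨k', rfl⟩ : ∃ k', k = k' + 1 := ⟨k-1, by omega⟩
    rw [Nat.add_sub_cancel]; ring
  have e2 : (2*n + 2*m)*k = k*(2*n) + k*(2*m) := by ring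
  omega

lemma mul2_mod (c w : ℕ) : (c*(2*w)) % 2 = 0 := by
  have h : c*(2*w) = 2*(c*w) := by ring
  omega

lemma J_match (n m k : ℕ)
    (x y : (Fin (2*n) ⊕ Fin (2*m)) × Fin k) :
    (fromBlocks (J n) 0 0 (J (k*(n+m)-n))) (gfun n m k x) (gfun n m k y) =
      (fromBlocks (J n) 0 0 (J m)) x.1 y.1 * (if x.2 = y.2 then 1 else 0) := by
  obtain ⟨x1, a⟩ := x
  obtain ⟨y1, b⟩ := y
  rcases x1 with i | i <;> rcases y1 with j | j <;> simp only [gfun]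
  · -- inl, inl
    by_cases hab : a = b
    · subst hab
      rw [if_pos rfl, mul_one]
      split_ifs with h1
      · simp only [Matrix.fromBlocks_apply₁₁]
      · simp only [Matrix.fromBlocks_apply₂₂, Matrix.fromBlocks_apply₁₁, J_apply]
        exact Jval_shift _ _ _ (mul2_mod _ _)
    · rw [if_neg hab, mul_zero]
      split_ifs with h1 h2 h2
      · exact absurd (Fin.ext (by omega)) hab
      · simp [Matrix.fromBlocks_apply₁₂]
      · simp [Matrix.fromBlocks_apply₂₁]
      · simp only [Matrix.fromBlocks_apply₂₂, J_apply]
        obtain ⟨a', ha'⟩ : ∃ a', a.val = a' + 1 := ⟨a.val-1, by omega⟩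
        obtain ⟨b', hb'⟩ : ∃ b', b.val = b' + 1 := ⟨b.val-1, by omega⟩
        rw [ha', hb', Nat.add_sub_cancel, Nat.add_sub_cancel]
        have hab' : a' ≠ b' := fun h => hab (Fin.ext (by omega))
        rcases Nat.lt_or_ge a' b' with hlt | hge
        · have e1 : a'*(2*n) + 2*n = (a'+1)*(2*n) := by ring
          have e2 : (a'+1)*(2*n) ≤ b'*(2*n) := Nat.mul_le_mul (by omega) (le_refl _)
          exact (Jval_split (mul2_mod b' n) (by have := i.isLt; omega) (by omega)).1
        · have hlt : b' < a' := by omega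
          have e1 : b'*(2*n) + 2*n = (b'+1)*(2*n) := by ring
          have e2 : (b'+1)*(2*n) ≤ a'*(2*n) := Nat.mul_le_mul (by omega) (le_refl _)
          exact (Jval_split (mul2_mod a' n) (by have := j.isLt; omega) (by omega)).2
  · -- inl, inr
    rw [Matrix.fromBlocks_apply₁₂, Matrix.zero_apply, zero_mul]
    split_ifs with h1
    · simp [Matrix.fromBlocks_apply₁₂]
    · simp only [Matrix.fromBlocks_apply₂₂, J_apply]
      obtain ⟨a', ha'⟩ : ∃ a', a.val = a' + 1 := ⟨a.val-1, by omega⟩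
      rw [ha', Nat.add_sub_cancel]
      have e1 : a'*(2*n) + 2*n = (a'+1)*(2*n) := by ring
      have e2 : (a'+1)*(2*n) ≤ (k-1)*(2*n) :=
        Nat.mul_le_mul (by have := a.isLt; omega) (le_refl _)
      exact (Jval_split (mul2_mod (k-1) n) (by have := i.isLt; omega) (by omega)).1
  · -- inr, inl
    rw [Matrix.fromBlocks_apply₂₁, Matrix.zero_apply, zero_mul]
    split_ifs with h1
    · simp [Matrix.fromBlocks_apply₂₁]
    · simp only [Matrix.fromBlocks_apply₂₂, J_apply]
      obtain ⟨b', hb'⟩ : ∃ b', b.val = b' + 1 := ⟨b.val-1, by omega⟩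
      rw [hb', Nat.add_sub_cancel]
      have e1 : b'*(2*n) + 2*n = (b'+1)*(2*n) := by ring
      have e2 : (b'+1)*(2*n) ≤ (k-1)*(2*n) :=
        Nat.mul_le_mul (by have := b.isLt; omega) (le_refl _)
      exact (Jval_split (mul2_mod (k-1) n) (by have := j.isLt; omega) (by omega)).2
  · -- inr, inr
    simp only [Matrix.fromBlocks_apply₂₂, J_apply]
    by_cases hab : a = b
    · subst hab
      rw [if_pos rfl, mul_one]
      have hc : ((k-1)*(2*n) + a.val*(2*m)) % 2 = 0 := by
        have := mul2_mod (k-1) n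
        have := mul2_mod a.val m
        omega
      exact Jval_shift _ _ _ hc
    · rw [if_neg hab, mul_zero]
      have hab' : a.val ≠ b.val := fun h => hab (Fin.ext h)
      rcases Nat.lt_or_ge a.val b.val with hlt | hge
      · have e1 : a.val*(2*m) + 2*m = (a.val+1)*(2*m) := by ring
        have e2 : (a.val+1)*(2*m) ≤ b.val*(2*m) := Nat.mul_le_mul (by omega) (le_refl _)
        have hc : ((k-1)*(2*n) + b.val*(2*m)) % 2 = 0 := by
          have := mul2_mod (k-1) n
          have := mul2_mod b.val m
          omega
        exact (Jval_split hc (by have := i.isLt; omega) (by omega)).1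
      · have hlt : b.val < a.val := by omega
        have e1 : b.val*(2*m) + 2*m = (b.val+1)*(2*m) := by ring
        have e2 : (b.val+1)*(2*m) ≤ a.val*(2*m) := Nat.mul_le_mul (by omega) (le_refl _)
        have hc : ((k-1)*(2*n) + a.val*(2*m)) % 2 = 0 := by
          have := mul2_mod (k-1) n
          have := mul2_mod a.val m
          omega
        exact (Jval_split hc (by have := j.isLt; omega) (by omega)).2

lemma exists_orthogonal_row {k : ℕ} (hk : 0 < k) (p : Fin k → ℝ) (hp : ∀ i, 0 ≤ p i)
    (hsum : ∑ i, p i = 1) :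
    ∃ U : Matrix (Fin k) (Fin k) ℝ,
      (∀ a a', ∑ c, U a c * U a' c = if a = a' then 1 else 0) ∧
      (∀ c, U ⟨0, hk⟩ c = Real.sqrt (p c)) := by
  classical
  let v : Fin k → EuclideanSpace ℝ (Fin k) := fun _ => WithLp.toLp 2 (fun c => Real.sqrt (p c))
  have hcard : Module.finrank ℝ (EuclideanSpace ℝ (Fin k)) = Fintype.card (Fin k) := by
    simp
  have horth : Orthonormal ℝ (({⟨0, hk⟩} : Set (Fin k)).restrict v) := by
    rw [orthonormal_iff_ite]
    rintro ⟨i, hi⟩ ⟨j, hj⟩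
    simp only [Set.mem_singleton_iff] at hi hj
    have hij : (⟨i, hi⟩ : ({⟨0, hk⟩} : Set (Fin k))) = ⟨j, hj⟩ := by
      apply Subtype.ext; show i = j; rw [hi, hj]
    rw [if_pos hij]
    show (inner ℝ (v i) (v j) : ℝ) = 1
    simp only [v, PiLp.inner_apply, PiLp.toLp_apply, RCLike.inner_apply, conj_trivial]
    rw [Finset.sum_congr rfl (fun c _ => Real.mul_self_sqrt (hp c))]
    exact hsum
  obtain ⟨b, hb⟩ := horth.exists_orthonormalBasis_extension_of_card_eq hcard
  refine ⟨Matrix.of fun a c => b a c, ?_, ?_⟩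
  · intro a a'
    have h := orthonormal_iff_ite.mp b.orthonormal a a'
    simp only [PiLp.inner_apply, RCLike.inner_apply, conj_trivial] at h
    rw [← h]; exact Finset.sum_congr rfl fun c _ => mul_comm _ _
  · intro c
    have h := hb ⟨0, hk⟩ rfl
    exact congrArg (fun x : EuclideanSpace ℝ (Fin k) => x c) h


open Kronecker

variable {ι : Type*} [Fintype ι] [DecidableEq ι] {k : ℕ}

lemma sandwich_symplectic (Jnm : Matrix ι ι ℝ) (L : Fin k → Matrix ι ι ℝ)
    (hL : ∀ c, (L c)ᵀ * Jnm * L c = Jnm)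
    (U : Matrix (Fin k) (Fin k) ℝ)
    (hU1 : U * Uᵀ = 1) (hU2 : Uᵀ * U = 1) :
    (((1 : Matrix ι ι ℝ) ⊗ₖ U) * (Matrix.blockDiagonal L * ((1 : Matrix ι ι ℝ) ⊗ₖ Uᵀ)))ᵀ *
      (Jnm ⊗ₖ (1 : Matrix (Fin k) (Fin k) ℝ)) *
      (((1 : Matrix ι ι ℝ) ⊗ₖ U) * (Matrix.blockDiagonal L * ((1 : Matrix ι ι ℝ) ⊗ₖ Uᵀ))) =
    Jnm ⊗ₖ (1 : Matrix (Fin k) (Fin k) ℝ) := by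
  set M1 : Matrix (ι × Fin k) (ι × Fin k) ℝ := (1 : Matrix ι ι ℝ) ⊗ₖ U with hM1
  set M2 : Matrix (ι × Fin k) (ι × Fin k) ℝ := (1 : Matrix ι ι ℝ) ⊗ₖ Uᵀ with hM2
  set D : Matrix (ι × Fin k) (ι × Fin k) ℝ := Matrix.blockDiagonal L with hD
  set Jb : Matrix (ι × Fin k) (ι × Fin k) ℝ := Jnm ⊗ₖ (1 : Matrix (Fin k) (Fin k) ℝ) with hJb
  have hM1t : M1ᵀ = M2 := by
    rw [hM1, hM2, ← Matrix.kroneckerMap_transpose, Matrix.transpose_one]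
  have hM2t : M2ᵀ = M1 := by
    rw [hM2, hM1, ← Matrix.kroneckerMap_transpose, Matrix.transpose_one, Matrix.transpose_transpose]
  have hJbd : Jb = Matrix.blockDiagonal (fun _ : Fin k => Jnm) := by
    ext x y
    obtain ⟨x1, a⟩ := x
    obtain ⟨y1, b⟩ := y
    simp only [hJb, Matrix.kroneckerMap_apply, Matrix.blockDiagonal_apply, Matrix.one_apply,
      mul_ite, mul_one, mul_zero]
  have hmid : ∀ X : Matrix (ι × Fin k) (ι × Fin k) ℝ, M2 * (Jb * (M1 * X)) = Jb * X := by
    intro X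
    have h : M2 * Jb * M1 = Jb := by
      rw [hM1, hM2, hJb, ← Matrix.mul_kronecker_mul, ← Matrix.mul_kronecker_mul]
      simp [hU2]
    calc M2 * (Jb * (M1 * X)) = (M2 * Jb * M1) * X := by simp only [Matrix.mul_assoc]
    _ = Jb * X := by rw [h]
  have hdiag : ∀ X : Matrix (ι × Fin k) (ι × Fin k) ℝ, Dᵀ * (Jb * (D * X)) = Jb * X := by
    intro X
    have h : Dᵀ * Jb * D = Jb := by
      rw [hD, hJbd, Matrix.blockDiagonal_transpose, ← Matrix.blockDiagonal_mul,
        ← Matrix.blockDiagonal_mul]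
      exact congrArg _ (funext fun c => hL c)
    calc Dᵀ * (Jb * (D * X)) = (Dᵀ * Jb * D) * X := by simp only [Matrix.mul_assoc]
    _ = Jb * X := by rw [h]
  have houter : M1 * (Jb * M2) = Jb := by
    rw [hM1, hM2, hJb, ← Matrix.mul_kronecker_mul, ← Matrix.mul_kronecker_mul]
    simp [hU1]
  have ht : (M1 * (D * M2))ᵀ = M1 * (Dᵀ * M2) := by
    rw [Matrix.transpose_mul, Matrix.transpose_mul, hM1t, hM2t, Matrix.mul_assoc]
  rw [ht]
  calc M1 * (Dᵀ * M2) * Jb * (M1 * (D * M2))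
      = M1 * (Dᵀ * (M2 * (Jb * (M1 * (D * M2))))) := by simp only [Matrix.mul_assoc]
  _ = M1 * (Dᵀ * (Jb * (D * M2))) := by rw [hmid]
  _ = M1 * (Jb * M2) := by rw [hdiag]
  _ = Jb := houter

lemma sandwich_entry (L : Fin k → Matrix ι ι ℝ) (U : Matrix (Fin k) (Fin k) ℝ)
    (x y : ι) (a b : Fin k) :
    (((1 : Matrix ι ι ℝ) ⊗ₖ U) * (Matrix.blockDiagonal L * ((1 : Matrix ι ι ℝ) ⊗ₖ Uᵀ)))
      (x, a) (y, b) = ∑ c, U a c * U b c * L c x y := by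
  have h1 : ∀ c : Fin k, (Matrix.blockDiagonal L * ((1 : Matrix ι ι ℝ) ⊗ₖ Uᵀ)) (x, c) (y, b)
      = L c x y * U b c := by
    intro c
    rw [Matrix.mul_apply, Fintype.sum_prod_type]
    simp [Matrix.blockDiagonal_apply, Matrix.one_apply, ite_mul, mul_ite,
      Finset.sum_ite_eq, Finset.sum_ite_eq']
  rw [Matrix.mul_apply, Fintype.sum_prod_type]
  simp only [Matrix.kroneckerMap_apply, Matrix.one_apply, ite_mul, one_mul, zero_mul]
  rw [Finset.sum_comm]
  simp only [Finset.sum_ite_eq, Finset.mem_univ, if_true]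
  calc ∑ c, U a c * (Matrix.blockDiagonal L * ((1 : Matrix ι ι ℝ) ⊗ₖ Uᵀ)) (x, c) (y, b)
      = ∑ c, U a c * (L c x y * U b c) := by
        exact Finset.sum_congr rfl fun c _ => by rw [h1 c]
  _ = ∑ c, U a c * U b c * L c x y := by
        exact Finset.sum_congr rfl fun c _ => by ring


/-- A convex combination of k matrices each admitting a symplectic dilation of order
2(n+m) admits a symplectic dilation of order 2k(n+m). -/
theorem convex_combination_symplectic_dilation {n m k : ℕ}
    (A : Fin k → Matrix (Fin (2*n)) (Fin (2*n)) ℝ) (p : Fin k → ℝ)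
    (hp : ∀ i, 0 < p i) (hsum : ∑ i, p i = 1)
    (hA : ∀ i, ∃ (B : Matrix (Fin (2*n)) (Fin (2*m)) ℝ)
          (C : Matrix (Fin (2*m)) (Fin (2*n)) ℝ)
          (D : Matrix (Fin (2*m)) (Fin (2*m)) ℝ),
        (Matrix.fromBlocks (A i) B C D)ᵀ * Matrix.fromBlocks (J n) 0 0 (J m) *
          Matrix.fromBlocks (A i) B C D = Matrix.fromBlocks (J n) 0 0 (J m)) :
    ∃ (B : Matrix (Fin (2*n)) (Fin (2*(k*(n+m)-n))) ℝ)
      (C : Matrix (Fin (2*(k*(n+m)-n))) (Fin (2*n)) ℝ)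
      (D : Matrix (Fin (2*(k*(n+m)-n))) (Fin (2*(k*(n+m)-n))) ℝ),
        (Matrix.fromBlocks (∑ i, p i • A i) B C D)ᵀ *
          Matrix.fromBlocks (J n) 0 0 (J (k*(n+m)-n)) *
          Matrix.fromBlocks (∑ i, p i • A i) B C D =
        Matrix.fromBlocks (J n) 0 0 (J (k*(n+m)-n)) := by
  classical
  have hk : 0 < k := by
    rcases Nat.eq_zero_or_pos k with h | h
    · subst h
      simp at hsum
    · exact h
  choose Bf Cf Df hL using hA
  let L : Fin k → Matrix (Fin (2*n) ⊕ Fin (2*m)) (Fin (2*n) ⊕ Fin (2*m)) ℝ :=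
    fun c => fromBlocks (A c) (Bf c) (Cf c) (Df c)
  have hL' : ∀ c, (L c)ᵀ * fromBlocks (J n) 0 0 (J m) * L c
      = fromBlocks (J n) 0 0 (J m) := hL
  obtain ⟨U, hU, hU0⟩ := exists_orthogonal_row hk p (fun i => (hp i).le) hsum
  have hU1 : U * Uᵀ = 1 := by
    ext a a'
    rw [Matrix.mul_apply, Matrix.one_apply]
    simpa [Matrix.transpose_apply] using hU a a'
  have hU2 : Uᵀ * U = 1 := mul_eq_one_comm.mp hU1
  set S : Matrix ((Fin (2*n) ⊕ Fin (2*m)) × Fin k) ((Fin (2*n) ⊕ Fin (2*m)) × Fin k) ℝ :=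
    ((1 : Matrix _ _ ℝ) ⊗ₖ U) * (Matrix.blockDiagonal L * ((1 : Matrix _ _ ℝ) ⊗ₖ Uᵀ))
    with hSdef
  have hS : Sᵀ * (fromBlocks (J n) 0 0 (J m) ⊗ₖ (1 : Matrix (Fin k) (Fin k) ℝ)) * S
      = fromBlocks (J n) 0 0 (J m) ⊗ₖ (1 : Matrix (Fin k) (Fin k) ℝ) :=
    sandwich_symplectic (fromBlocks (J n) 0 0 (J m)) L hL' U hU1 hU2
  let e : (Fin (2*n) ⊕ Fin (2*(k*(n+m)-n))) ≃ ((Fin (2*n) ⊕ Fin (2*m)) × Fin k) :=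
    (Equiv.ofBijective _ (gfun_bij n m k hk)).symm
  have hge : ∀ u, gfun n m k (e u) = u := fun u =>
    (Equiv.ofBijective _ (gfun_bij n m k hk)).apply_symm_apply u
  have hJsub : fromBlocks (J n) 0 0 (J (k*(n+m)-n)) =
      (fromBlocks (J n) 0 0 (J m) ⊗ₖ (1 : Matrix (Fin k) (Fin k) ℝ)).submatrix e e := by
    ext u v
    have h := J_match n m k (e u) (e v)
    rw [hge, hge] at h
    rw [Matrix.submatrix_apply, Matrix.kroneckerMap_apply, Matrix.one_apply]
    exact h
  set T := S.submatrix e e with hT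
  have hTs : Tᵀ * fromBlocks (J n) 0 0 (J (k*(n+m)-n)) * T
      = fromBlocks (J n) 0 0 (J (k*(n+m)-n)) := by
    rw [hT, hJsub, Matrix.transpose_submatrix, Matrix.submatrix_mul_equiv,
      Matrix.submatrix_mul_equiv, hS]
  have he : ∀ i : Fin (2*n), e (Sum.inl i) = (Sum.inl i, ⟨0, hk⟩) := by
    intro i
    have h1 : (Equiv.ofBijective _ (gfun_bij n m k hk)) (e (Sum.inl i)) = Sum.inl i :=
      (Equiv.ofBijective _ (gfun_bij n m k hk)).apply_symm_apply _
    have h2 : (Equiv.ofBijective _ (gfun_bij n m k hk))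
        ((Sum.inl i, ⟨0, hk⟩) : (Fin (2*n) ⊕ Fin (2*m)) × Fin k) = Sum.inl i := by
      show gfun n m k (Sum.inl i, ⟨0, hk⟩) = Sum.inl i
      simp [gfun]
    exact (Equiv.ofBijective _ (gfun_bij n m k hk)).injective (h1.trans h2.symm)
  have htop : T.toBlocks₁₁ = ∑ c, p c • A c := by
    ext i j
    rw [Matrix.toBlocks₁₁]
    simp only [Matrix.of_apply]
    rw [hT, Matrix.submatrix_apply, he, he, hSdef, sandwich_entry, Matrix.sum_apply]
    apply Finset.sum_congr rfl
    intro c _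
    rw [hU0 c, Real.mul_self_sqrt (hp c).le, Matrix.smul_apply, smul_eq_mul]
    congr 1
  refine ⟨T.toBlocks₁₂, T.toBlocks₂₁, T.toBlocks₂₂, ?_⟩
  rw [← htop, Matrix.fromBlocks_toBlocks]
  exact hTs
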